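/- Suppose an explaining system with lag ℓ and state dimension n exists with ℓ ≥ q (q = min{k : δ_k = 0}). Then n − Σ_{i=0}^{q} δ_i ≥ ℓ − q. In particular, any explaining system satisfies ℓ ≤ n − n_min + ℓ_min where ℓ_min = q and n_min = Σ_{i=0}^{q} δ_i. -/

import Mathlib

open Matrix
noncomputable section

/-- `obsMat A C k` is the observability matrix Ω_k, the stack of C, CA, ..., CA^k. -/
def obsMat {ι : Type*} [Fintype ι] [DecidableEq ι] {p : ℕ}
    (A : Matrix ι ι ℝ) (C : Matrix (Fin p) ι ℝ) (k : ℕ) :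
    Matrix (Fin (k + 1) × Fin p) ι ℝ :=
  Matrix.of fun ir j => (C * A ^ (ir.1 : ℕ)) ir.2 j

/-- `obsRank A C (k+1) = rank Ω_k`; `obsRank A C 0 = rank Ω_{-1} = 0` (void matrix). -/
def obsRank {ι : Type*} [Fintype ι] [DecidableEq ι] {p : ℕ}
    (A : Matrix ι ι ℝ) (C : Matrix (Fin p) ι ℝ) : ℕ → ℕ
  | 0 => 0
  | k + 1 => (obsMat A C k).rank

/-- ρ_k = rank Ω_k − rank Ω_{k-1}. -/
def rho {ι : Type*} [Fintype ι] [DecidableEq ι] {p : ℕ}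
    (A : Matrix ι ι ℝ) (C : Matrix (Fin p) ι ℝ) (k : ℕ) : ℕ :=
  obsRank A C (k + 1) - obsRank A C k

/-- The lag ℓ(C,A): the smallest k ≥ 0 with rank Ω_k = rank Ω_{k-1}. -/
def lag {ι : Type*} [Fintype ι] [DecidableEq ι] {p : ℕ}
    (A : Matrix ι ι ℝ) (C : Matrix (Fin p) ι ℝ) : ℕ :=
  sInf {k | obsRank A C (k + 1) = obsRank A C k}

/-- (C,A) is observable iff rank Ω_{n-1} = n where n is the state dimension. -/
def Observable {ι : Type*} [Fintype ι] [DecidableEq ι] {p : ℕ}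
    (A : Matrix ι ι ℝ) (C : Matrix (Fin p) ι ℝ) : Prop :=
  obsRank A C (Fintype.card ι) = Fintype.card ι

/-- Block Hankel matrix of depth k+1 built from f_0, ..., f_{T-1}. -/
def hankel {r T : ℕ} (f : Fin T → Fin r → ℝ) (k : ℕ) :
    Matrix (Fin (k + 1) × Fin r) (Fin (T - k)) ℝ :=
  Matrix.of fun ia j =>
    f ⟨(ia.1 : ℕ) + (j : ℕ), by have h1 := ia.1.isLt; have h2 := j.isLt; omega⟩ ia.2

/-- H_k : Hankel matrix of depth k+1 of the stacked data (u; y). -/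
def Hmat {m p T : ℕ} (u : Fin T → Fin m → ℝ) (y : Fin T → Fin p → ℝ) (k : ℕ) :
    Matrix ((Fin (k + 1) × Fin m) ⊕ (Fin (k + 1) × Fin p)) (Fin (T - k)) ℝ :=
  Matrix.fromRows (hankel u k) (hankel y k)

/-- G_k : H_k with its last p rows (the y_k block) deleted. -/
def Gmat {m p T : ℕ} (u : Fin T → Fin m → ℝ) (y : Fin T → Fin p → ℝ) (k : ℕ) :
    Matrix ((Fin (k + 1) × Fin m) ⊕ (Fin k × Fin p)) (Fin (T - k)) ℝ :=
  Matrix.fromRows (hankel u k)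
    (Matrix.of fun ia j =>
      y ⟨(ia.1 : ℕ) + (j : ℕ), by have h1 := ia.1.isLt; have h2 := j.isLt; omega⟩ ia.2)

/-- δ_k = rank H_k − rank G_k. -/
def delta {m p T : ℕ} (u : Fin T → Fin m → ℝ) (y : Fin T → Fin p → ℝ) (k : ℕ) : ℕ :=
  (Hmat u y k).rank - (Gmat u y k).rank

/-- (A,B,C,D) explains the data (u,y) with state sequence x. -/
def Explains {ι : Type*} [Fintype ι] {m p T : ℕ}
    (A : Matrix ι ι ℝ) (B : Matrix ι (Fin m) ℝ)
    (C : Matrix (Fin p) ι ℝ) (D : Matrix (Fin p) (Fin m) ℝ)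
    (u : Fin T → Fin m → ℝ) (y : Fin T → Fin p → ℝ) (x : Fin (T + 1) → ι → ℝ) : Prop :=
  ∀ t : Fin T,
    x t.succ = A.mulVec (x t.castSucc) + B.mulVec (u t) ∧
    y t = C.mulVec (x t.castSucc) + D.mulVec (u t)

open Submodule Module

def rowSpan {α β : Type*} (M : Matrix α β ℝ) : Submodule ℝ (β → ℝ) :=
  Submodule.span ℝ (Set.range M)

lemma rank_eq_rowSpan {α β : Type*} [Fintype α] [Fintype β] (M : Matrix α β ℝ) :
    M.rank = finrank ℝ (rowSpan M) := by
  rw [← Matrix.rank_transpose, Matrix.rank_eq_finrank_span_cols]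
  rfl

lemma rowSpan_fromRows {α α' β : Type*} (M : Matrix α β ℝ) (N : Matrix α' β ℝ) :
    rowSpan (Matrix.fromRows M N) = rowSpan M ⊔ rowSpan N := by
  have hr : Set.range (Matrix.fromRows M N) = Set.range M ∪ Set.range N := by
    ext w
    constructor
    · rintro ⟨i | i, rfl⟩
      · exact Or.inl ⟨i, rfl⟩
      · exact Or.inr ⟨i, rfl⟩
    · rintro (⟨i, rfl⟩ | ⟨i, rfl⟩)
      · exact ⟨Sum.inl i, rfl⟩
      · exact ⟨Sum.inr i, rfl⟩
  rw [rowSpan, hr, Submodule.span_union]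
  rfl

lemma finrank_sup_map_le {V W : Type*} [AddCommGroup V] [Module ℝ V] [AddCommGroup W]
    [Module ℝ W] [FiniteDimensional ℝ V] [FiniteDimensional ℝ W]
    (f : V →ₗ[ℝ] W) (S : Submodule ℝ W) {W₁ W₂ : Submodule ℝ V} (h : W₁ ≤ W₂) :
    finrank ℝ ↥(S ⊔ W₂.map f) + finrank ℝ ↥W₁ ≤ finrank ℝ ↥(S ⊔ W₁.map f) + finrank ℝ ↥W₂ := by
  obtain ⟨Wc, hWc⟩ := Submodule.exists_isCompl (Submodule.comap W₂.subtype W₁)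
  set W' := Wc.map W₂.subtype with hW'
  have hsup : W₁ ⊔ W' = W₂ := by
    have h0 := congrArg (Submodule.map W₂.subtype) hWc.sup_eq_top
    rwa [Submodule.map_sup, Submodule.map_comap_subtype, inf_eq_right.mpr h,
      Submodule.map_subtype_top] at h0
  have hdisj : Disjoint W₁ W' := by
    rw [disjoint_iff, eq_bot_iff]
    rintro v ⟨hv1, hv2⟩
    obtain ⟨w, hw, rfl⟩ := hv2
    have hw2 : w ∈ Submodule.comap W₂.subtype W₁ ⊓ Wc := ⟨hv1, hw⟩
    rw [hWc.inf_eq_bot] at hw2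
    simp only [Submodule.mem_bot] at hw2
    simp [hw2]
  have hr : finrank ℝ ↥W₁ + finrank ℝ ↥W' = finrank ℝ ↥W₂ := by
    have h1 := Submodule.finrank_sup_add_finrank_inf_eq W₁ W'
    rw [hsup, hdisj.eq_bot, finrank_bot] at h1
    omega
  have h1 : S ⊔ W₂.map f = (S ⊔ W₁.map f) ⊔ W'.map f := by
    rw [← hsup, Submodule.map_sup, sup_assoc]
  have h2 := Submodule.finrank_add_le_finrank_add_finrank (S ⊔ W₁.map f) (W'.map f)
  have h3 : finrank ℝ ↥(W'.map f) ≤ finrank ℝ ↥W' := Submodule.finrank_map_le f W'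
  rw [h1]
  omega

lemma sup_span_range_eq {ι V W : Type*} [AddCommGroup V] [Module ℝ V] [AddCommGroup W]
    [Module ℝ W] (f : V →ₗ[ℝ] W) (S : Submodule ℝ W) (g : ι → W) (Ω : ι → V)
    (h : ∀ r, g r - f (Ω r) ∈ S) :
    S ⊔ Submodule.span ℝ (Set.range g) = S ⊔ (Submodule.span ℝ (Set.range Ω)).map f := by
  apply le_antisymm
  · refine sup_le le_sup_left (Submodule.span_le.mpr ?_)
    rintro _ ⟨r, rfl⟩
    have hg : g r = (g r - f (Ω r)) + f (Ω r) := by abel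
    rw [hg]
    exact Submodule.add_mem _ (Submodule.mem_sup_left (h r))
      (Submodule.mem_sup_right (Submodule.mem_map_of_mem (Submodule.subset_span ⟨r, rfl⟩)))
  · refine sup_le le_sup_left ?_
    rw [Submodule.map_span]
    refine Submodule.span_le.mpr ?_
    rintro _ ⟨_, ⟨r, rfl⟩, rfl⟩
    have hg : f (Ω r) = g r - (g r - f (Ω r)) := by abel
    rw [hg]
    exact Submodule.sub_mem _ (Submodule.mem_sup_right (Submodule.subset_span ⟨r, rfl⟩))
      (Submodule.mem_sup_left (h r))

section Dyn
variable {n m p T : ℕ}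
    (A : Matrix (Fin n) (Fin n) ℝ) (B : Matrix (Fin n) (Fin m) ℝ)
    (C : Matrix (Fin p) (Fin n) ℝ) (D : Matrix (Fin p) (Fin m) ℝ)
    (u : Fin T → Fin m → ℝ) (y : Fin T → Fin p → ℝ) (x : Fin (T + 1) → Fin n → ℝ)

def Rspan (k : ℕ) : Submodule ℝ (Fin n → ℝ) :=
  Submodule.span ℝ {w | ∃ i < k, ∃ a, (C * A ^ i) a = w}

lemma Rspan_mono {k l : ℕ} (h : k ≤ l) : Rspan A C k ≤ Rspan A C l :=
  Submodule.span_mono fun w ⟨i, hi, a, ha⟩ => ⟨i, lt_of_lt_of_le hi h, a, ha⟩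

lemma obsRank_eq (k : ℕ) : obsRank A C k = finrank ℝ ↥(Rspan A C k) := by
  cases k with
  | zero =>
    have h0 : {w : Fin n → ℝ | ∃ i < 0, ∃ a, (C * A ^ i) a = w} = ∅ := by
      ext w; simp
    rw [show obsRank A C 0 = 0 from rfl, Rspan, h0, Submodule.span_empty, finrank_bot]
  | succ k =>
    rw [show obsRank A C (k + 1) = (obsMat A C k).rank from rfl, rank_eq_rowSpan, rowSpan, Rspan]
    have hs : Set.range (obsMat A C k) = {w : Fin n → ℝ | ∃ i < k + 1, ∃ a, (C * A ^ i) a = w} := by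
      ext w
      constructor
      · rintro ⟨⟨i, a⟩, rfl⟩
        exact ⟨i, i.isLt, a, rfl⟩
      · rintro ⟨i, hi, a, rfl⟩
        exact ⟨(⟨i, hi⟩, a), rfl⟩
    rw [hs]

lemma obsRank_mono (k l : ℕ) (h : k ≤ l) : obsRank A C k ≤ obsRank A C l := by
  rw [obsRank_eq, obsRank_eq]
  exact Submodule.finrank_mono (Rspan_mono A C h)

lemma obsRank_le_n (k : ℕ) : obsRank A C k ≤ n := by
  rw [obsRank_eq]
  calc finrank ℝ ↥(Rspan A C k) ≤ finrank ℝ (Fin n → ℝ) := Submodule.finrank_le _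
  _ = n := Module.finrank_fin_fun ℝ

lemma state_formula (hE : Explains A B C D u y x) (i j : ℕ) (hij : i + j < T) :
    x ⟨i + j, by omega⟩ = (A ^ i).mulVec (x ⟨j, by omega⟩)
      + ∑ s ∈ Finset.range i, (A ^ s * B).mulVec (u ⟨(i - 1 - s) + j, by omega⟩) := by
  induction i with
  | zero =>
    simp only [show (0 + j : ℕ) = j from by omega]
    rw [pow_zero, Matrix.one_mulVec, Finset.sum_range_zero, add_zero]
  | succ i ih =>
    have hij' : i + j < T := by omega
    have hE1 : x ⟨(i + j) + 1, by omega⟩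
        = A.mulVec (x ⟨i + j, by omega⟩) + B.mulVec (u ⟨i + j, hij'⟩) := (hE ⟨i + j, hij'⟩).1
    simp only [show ((i + 1) + j : ℕ) = (i + j) + 1 from by omega]
    rw [hE1, ih hij', Matrix.mulVec_add, Matrix.mulVec_mulVec, ← pow_succ']
    have hsum : A.mulVec (∑ s ∈ Finset.range i, (A ^ s * B).mulVec (u ⟨(i - 1 - s) + j, by omega⟩))
        = ∑ s ∈ Finset.range i, (A ^ (s + 1) * B).mulVec (u ⟨(i - 1 - s) + j, by omega⟩) := by
      rw [show A.mulVec (∑ s ∈ Finset.range i, (A ^ s * B).mulVec (u ⟨(i - 1 - s) + j, by omega⟩))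
          = A.mulVecLin (∑ s ∈ Finset.range i, (A ^ s * B).mulVec (u ⟨(i - 1 - s) + j, by omega⟩))
          from rfl, map_sum]
      refine Finset.sum_congr rfl fun s hs => ?_
      rw [Matrix.mulVecLin_apply, Matrix.mulVec_mulVec, ← Matrix.mul_assoc, ← pow_succ']
    rw [hsum, add_assoc]
    congr 1
    rw [Finset.sum_range_succ'
      (fun s => ((A ^ s * B).mulVec (u ⟨(i + 1 - 1 - s) + j, by omega⟩))) i]
    congr 1
    · refine Finset.sum_congr rfl fun s hs => ?_
      simp only [Finset.mem_range] at hs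
      have hidx : (i - 1 - s + j : ℕ) = (i + 1 - 1 - (s + 1) + j : ℕ) := by omega
      simp only [hidx]
    · rw [pow_zero, Matrix.one_mul]
      simp only [show (i + 1 - 1 - 0 + j : ℕ) = i + j from by omega]

lemma y_formula (hE : Explains A B C D u y x) (i j : ℕ) (hij : i + j < T) :
    y ⟨i + j, hij⟩ = (C * A ^ i).mulVec (x ⟨j, by omega⟩)
      + ∑ s ∈ Finset.range i, (C * A ^ s * B).mulVec (u ⟨(i - 1 - s) + j, by omega⟩)
      + D.mulVec (u ⟨i + j, hij⟩) := by
  have h2 : y ⟨i + j, hij⟩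
      = C.mulVec (x ⟨i + j, by omega⟩) + D.mulVec (u ⟨i + j, hij⟩) := (hE ⟨i + j, hij⟩).2
  rw [h2, state_formula A B C D u y x hE i j hij]
  congr 1
  rw [Matrix.mulVec_add, Matrix.mulVec_mulVec]
  congr 1
  rw [show C.mulVec (∑ s ∈ Finset.range i, (A ^ s * B).mulVec (u ⟨(i - 1 - s) + j, by omega⟩))
      = C.mulVecLin (∑ s ∈ Finset.range i, (A ^ s * B).mulVec (u ⟨(i - 1 - s) + j, by omega⟩))
      from rfl, map_sum]
  refine Finset.sum_congr rfl fun s hs => ?_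
  rw [Matrix.mulVecLin_apply, Matrix.mulVec_mulVec, ← Matrix.mul_assoc]

end Dyn

section Main
variable {n m p T : ℕ}
    (A : Matrix (Fin n) (Fin n) ℝ) (B : Matrix (Fin n) (Fin m) ℝ)
    (C : Matrix (Fin p) (Fin n) ℝ) (D : Matrix (Fin p) (Fin m) ℝ)
    (u : Fin T → Fin m → ℝ) (y : Fin T → Fin p → ℝ) (x : Fin (T + 1) → Fin n → ℝ)

def Xmat (k : ℕ) : Matrix (Fin n) (Fin (T - k)) ℝ :=
  Matrix.of fun c j => x ⟨(j : ℕ), by have := j.isLt; omega⟩ c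

lemma Rspan_eq_range (kk : ℕ) :
    Rspan A C kk
      = Submodule.span ℝ (Set.range fun ia : Fin kk × Fin p => (C * A ^ (ia.1 : ℕ)) ia.2) := by
  unfold Rspan
  congr 1
  ext w
  constructor
  · rintro ⟨i, hi, a, rfl⟩
    exact ⟨(⟨i, hi⟩, a), rfl⟩
  · rintro ⟨⟨i, a⟩, rfl⟩
    exact ⟨i, i.isLt, a, rfl⟩

lemma row_mem (hE : Explains A B C D u y x) (k : ℕ) {kk : ℕ} (hkk : kk ≤ k + 1)
    (ia : Fin kk × Fin p) :
    (fun j : Fin (T - k) =>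
        y ⟨(ia.1 : ℕ) + (j : ℕ), by have := ia.1.isLt; have := j.isLt; omega⟩ ia.2)
      - (Xmat x k).vecMulLinear ((C * A ^ (ia.1 : ℕ)) ia.2) ∈ rowSpan (hankel u k) := by
  obtain ⟨⟨i, hi⟩, a⟩ := ia
  show (fun j : Fin (T - k) => y ⟨i + (j : ℕ), by have := j.isLt; omega⟩ a)
      - (Xmat x k).vecMulLinear ((C * A ^ i) a) ∈ rowSpan (hankel u k)
  have hkey : (fun j : Fin (T - k) => y ⟨i + (j : ℕ), by have := j.isLt; omega⟩ a)
      - (Xmat x k).vecMulLinear ((C * A ^ i) a)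
      = (∑ s ∈ Finset.range i, ∑ b,
          (C * A ^ s * B) a b • hankel u k (⟨i - 1 - s, by omega⟩, b))
        + ∑ b, D a b • hankel u k (⟨i, by omega⟩, b) := by
    funext j
    have hijT : i + (j : ℕ) < T := by have := j.isLt; omega
    have hy := congrFun (y_formula A B C D u y x hE i j hijT) a
    simp only [Pi.sub_apply, Pi.add_apply, Finset.sum_apply, Pi.smul_apply, smul_eq_mul]
    rw [hy]
    simp only [Matrix.mulVec, Matrix.vecMulLinear_apply, Matrix.vecMul, dotProduct,
      Pi.add_apply, Finset.sum_apply, hankel, Xmat, Matrix.of_apply]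
    ring_nf
    simp only [Nat.add_comm (j : ℕ)]
    ring
  rw [hkey]
  refine Submodule.add_mem _ ?_ ?_
  · exact Submodule.sum_mem _ fun s hs => Submodule.sum_mem _ fun b _ =>
      Submodule.smul_mem _ _ (Submodule.subset_span ⟨(⟨i - 1 - s, by omega⟩, b), rfl⟩)
  · exact Submodule.sum_mem _ fun b _ =>
      Submodule.smul_mem _ _ (Submodule.subset_span ⟨(⟨i, by omega⟩, b), rfl⟩)

lemma sup_span_hankel (hE : Explains A B C D u y x) (k : ℕ) {kk : ℕ} (hkk : kk ≤ k + 1)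
    (Y : Matrix (Fin kk × Fin p) (Fin (T - k)) ℝ)
    (hY : ∀ (ia : Fin kk × Fin p) (j : Fin (T - k)),
      Y ia j = y ⟨(ia.1 : ℕ) + (j : ℕ), by have := ia.1.isLt; have := j.isLt; omega⟩ ia.2) :
    rowSpan (hankel u k) ⊔ rowSpan Y
      = rowSpan (hankel u k) ⊔ (Rspan A C kk).map (Xmat x k).vecMulLinear := by
  rw [Rspan_eq_range]
  apply sup_span_range_eq
  intro r
  have hYr : (Y r : Fin (T - k) → ℝ)
      = fun j : Fin (T - k) =>
          y ⟨(r.1 : ℕ) + (j : ℕ), by have := r.1.isLt; have := j.isLt; omega⟩ r.2 :=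
    funext fun j => hY r j
  rw [hYr]
  exact row_mem A B C D u y x hE k hkk r

lemma rank_Hmat_eq (hE : Explains A B C D u y x) (k : ℕ) :
    (Hmat u y k).rank = finrank ℝ
      ↥(rowSpan (hankel u k) ⊔ (Rspan A C (k + 1)).map (Xmat x k).vecMulLinear) := by
  rw [Hmat, rank_eq_rowSpan, rowSpan_fromRows,
    sup_span_hankel A B C D u y x hE k le_rfl (hankel y k) (fun ia j => rfl)]

lemma rank_Gmat_eq (hE : Explains A B C D u y x) (k : ℕ) :
    (Gmat u y k).rank = finrank ℝ
      ↥(rowSpan (hankel u k) ⊔ (Rspan A C k).map (Xmat x k).vecMulLinear) := by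
  rw [Gmat, rank_eq_rowSpan, rowSpan_fromRows,
    sup_span_hankel A B C D u y x hE k (Nat.le_succ k)
      (Matrix.of fun ia j =>
        y ⟨(ia.1 : ℕ) + (j : ℕ), by have h1 := ia.1.isLt; have h2 := j.isLt; omega⟩ ia.2)
      (fun ia j => rfl)]

lemma delta_rank_ineq (hE : Explains A B C D u y x) (k : ℕ) :
    (Hmat u y k).rank + obsRank A C k ≤ (Gmat u y k).rank + obsRank A C (k + 1) := by
  rw [rank_Hmat_eq A B C D u y x hE k, rank_Gmat_eq A B C D u y x hE k, obsRank_eq, obsRank_eq]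
  exact finrank_sup_map_le _ _ (Rspan_mono A C (Nat.le_succ k))

lemma sum_delta_le (hE : Explains A B C D u y x) (r : ℕ) :
    ∑ i ∈ Finset.range r, delta u y i ≤ obsRank A C r := by
  induction r with
  | zero => simp
  | succ r ih =>
    rw [Finset.sum_range_succ]
    have h1 := delta_rank_ineq A B C D u y x hE r
    have h2 := obsRank_mono A C r (r + 1) (Nat.le_succ r)
    have h3 : delta u y r = (Hmat u y r).rank - (Gmat u y r).rank := rfl
    omega

end Main

theorem stmt15 {n m p T : ℕ}
    (u : Fin T → Fin m → ℝ) (y : Fin T → Fin p → ℝ)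
    (q : ℕ) (hqT : q ≤ T - 1) (hq0 : delta u y q = 0)
    (hqmin : ∀ j < q, delta u y j ≠ 0)
    (A : Matrix (Fin n) (Fin n) ℝ) (B : Matrix (Fin n) (Fin m) ℝ)
    (C : Matrix (Fin p) (Fin n) ℝ) (D : Matrix (Fin p) (Fin m) ℝ)
    (x : Fin (T + 1) → Fin n → ℝ)
    (hE : Explains A B C D u y x)
    (hlq : q ≤ lag A C) :
    ((lag A C : ℤ) - (q : ℤ) ≤
        (n : ℤ) - ∑ i ∈ Finset.range (q + 1), (delta u y i : ℤ)) ∧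
    ((lag A C : ℤ) ≤
        (n : ℤ) - ∑ i ∈ Finset.range (q + 1), (delta u y i : ℤ) + (q : ℤ)) := by
  have hsum : ∑ i ∈ Finset.range (q + 1), delta u y i ≤ obsRank A C q := by
    rw [Finset.sum_range_succ, hq0, add_zero]
    exact sum_delta_le A B C D u y x hE q
  have hstep : ∀ d : ℕ, q + d ≤ lag A C → obsRank A C q + d ≤ obsRank A C (q + d) := by
    intro d
    induction d with
    | zero => intro _; simp
    | succ d ih =>
      intro hd
      have h1 := ih (by omega)
      have hne : obsRank A C ((q + d) + 1) ≠ obsRank A C (q + d) := by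
        intro hmem
        have h2 : lag A C ≤ q + d :=
          Nat.sInf_le (show (q + d) ∈ {k | obsRank A C (k + 1) = obsRank A C k} from hmem)
        omega
      have h3 := obsRank_mono A C (q + d) (q + d + 1) (Nat.le_succ _)
      show obsRank A C q + (d + 1) ≤ obsRank A C ((q + d) + 1)
      omega
  have hstep2 := hstep (lag A C - q) (by omega)
  have hobs_end := obsRank_le_n A C (q + (lag A C - q))
  have hZ : ∑ i ∈ Finset.range (q + 1), (delta u y i : ℤ)
      = ((∑ i ∈ Finset.range (q + 1), delta u y i : ℕ) : ℤ) := (Nat.cast_sum _ _).symm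
  rw [hZ]
  constructor <;> omega
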